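/- Suppose that: (1) 𝓘 attains a global minimum on the feasible set 𝓕 (in particular 𝓕 ≠ ∅ and the optimal value I_* = inf_{(x,z) ∈ 𝓕} 𝓘(x,z) is finite); (2) every image G(x,ω) is a closed subset of ℝ^m; (3) 𝓘 is Lipschitz continuous on every bounded subset of X; (4) there exists c ≥ 0 such that the set {(x,y) ∈ X : x ∈ A, Φ_c(x,y) < I_*} is bounded in X. Then the penalty function Φ_c is globally exact: there exists c_* ≥ 0 such that for every c ≥ c_* the set of global minimizers of Φ_c over A × L^p(Ω;ℝ^m) coincides with the set of global minimizers of 𝓘 over 𝓕. -/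

import Mathlib

open MeasureTheory Filter Topology Metric Set
open scoped ENNReal

noncomputable section

open EMetric

namespace ExactPen

variable {m : ℕ} {Ω : Type*} [MeasurableSpace Ω]

local notation "E" => EuclideanSpace ℝ (Fin m)

lemma infEdist_eq_iInf_seq (v : ℕ → E) (hv : DenseRange v) (a : E) (s : Set E) :
    EMetric.infEdist a s = ⨅ n, edist a (v n) + EMetric.infEdist (v n) s := by
  refine le_antisymm (le_iInf fun n => ?_) ?_
  · rw [add_comm]
    exact EMetric.infEdist_le_infEdist_add_edist
  · refine ENNReal.le_of_forall_pos_le_add fun ε hε hlt => ?_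
    have hε2 : (0:ℝ≥0∞) < (ε : ℝ≥0∞) / 2 := ENNReal.half_pos (by exact_mod_cast hε.ne')
    obtain ⟨_, ⟨n, rfl⟩, hn⟩ := EMetric.mem_closure_iff.1 (hv a) _ hε2
    calc (⨅ n, edist a (v n) + EMetric.infEdist (v n) s)
        ≤ edist a (v n) + EMetric.infEdist (v n) s := iInf_le _ n
      _ ≤ edist a (v n) + (EMetric.infEdist a s + edist (v n) a) :=
          add_le_add le_rfl EMetric.infEdist_le_infEdist_add_edist
      _ = EMetric.infEdist a s + (edist a (v n) + edist a (v n)) := by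
          rw [edist_comm (v n) a]; ring
      _ ≤ EMetric.infEdist a s + ((ε:ℝ≥0∞)/2 + (ε:ℝ≥0∞)/2) := by
          gcongr
      _ = EMetric.infEdist a s + ε := by rw [ENNReal.add_halves]

lemma measurable_infEdist_comp (S : Ω → Set E)
    (hS : ∀ v : E, Measurable fun ω => EMetric.infEdist v (S ω))
    {u : Ω → E} (hu : Measurable u) :
    Measurable fun ω => EMetric.infEdist (u ω) (S ω) := by
  obtain ⟨v, hv⟩ : ∃ v : ℕ → E, DenseRange v :=
    ⟨TopologicalSpace.denseSeq E, TopologicalSpace.denseRange_denseSeq E⟩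
  simp_rw [fun ω => infEdist_eq_iInf_seq v hv (u ω) (S ω)]
  exact Measurable.iInf fun n => (hu.edist measurable_const).add (hS (v n))

lemma measurableSet_nonempty (S : Ω → Set E)
    (hS : ∀ v : E, Measurable fun ω => EMetric.infEdist v (S ω)) :
    MeasurableSet {ω | (S ω).Nonempty} := by
  have h : {ω | (S ω).Nonempty} = (fun ω => EMetric.infEdist 0 (S ω)) ⁻¹' {⊤}ᶜ := by
    ext ω
    simp only [Set.mem_setOf_eq, Set.mem_preimage, Set.mem_compl_iff, Set.mem_singleton_iff]
    constructor
    · exact fun h => Metric.infEdist_ne_top h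
    · intro h
      by_contra he
      rw [Set.not_nonempty_iff_eq_empty] at he
      simp [he, EMetric.infEdist, Metric.infEDist_empty] at h
  rw [h]
  exact hS 0 (measurableSet_singleton ⊤).compl

lemma exists_step (S : Ω → Set E)
    (hS : ∀ v : E, Measurable fun ω => EMetric.infEdist v (S ω))
    {u : Ω → E} (hu : Measurable u) {η : ℝ≥0∞} (hη0 : η ≠ 0) (hηt : η ≠ ∞) :
    ∃ u' : Ω → E, Measurable u' ∧ ∀ ω, (S ω).Nonempty →
      EMetric.infEdist (u' ω) (S ω) < η ∧
      edist (u ω) (u' ω) < EMetric.infEdist (u ω) (S ω) + η := by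
  classical
  obtain ⟨v, hv⟩ : ∃ v : ℕ → E, DenseRange v :=
    ⟨TopologicalSpace.denseSeq E, TopologicalSpace.denseRange_denseSeq E⟩
  set Q : Ω → ℕ → Prop := fun ω n =>
    (¬ (S ω).Nonempty ∧ n = 0) ∨
    (EMetric.infEdist (v n) (S ω) < η ∧
      edist (u ω) (v n) < EMetric.infEdist (u ω) (S ω) + η) with hQ
  have hex : ∀ ω, ∃ n, Q ω n := by
    intro ω
    by_cases h : (S ω).Nonempty
    · have hD : EMetric.infEdist (u ω) (S ω) ≠ ⊤ := Metric.infEdist_ne_top h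
      have hη2 : (0:ℝ≥0∞) < η / 2 := ENNReal.half_pos hη0
      have h1 : EMetric.infEdist (u ω) (S ω) < EMetric.infEdist (u ω) (S ω) + η / 2 :=
        ENNReal.lt_add_right hD hη2.ne'
      obtain ⟨s, hs, hes⟩ := EMetric.infEdist_lt_iff.mp h1
      obtain ⟨_, ⟨n, rfl⟩, hvn⟩ := EMetric.mem_closure_iff.1 (hv s) _ hη2
      refine ⟨n, Or.inr ⟨?_, ?_⟩⟩
      · calc EMetric.infEdist (v n) (S ω) ≤ edist (v n) s := EMetric.infEdist_le_edist_of_mem hs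
          _ = edist s (v n) := edist_comm _ _
          _ < η / 2 := hvn
          _ < η := ENNReal.half_lt_self hη0 hηt
      · calc edist (u ω) (v n) ≤ edist (u ω) s + edist s (v n) := edist_triangle _ _ _
          _ < (EMetric.infEdist (u ω) (S ω) + η / 2) + η / 2 := by
              exact ENNReal.add_lt_add hes hvn
          _ = EMetric.infEdist (u ω) (S ω) + η := by rw [add_assoc, ENNReal.add_halves]
    · exact ⟨0, Or.inl ⟨h, rfl⟩⟩
  have hQm : ∀ n, MeasurableSet {ω | Q ω n} := by
    intro n
    have h1 : MeasurableSet {ω | ¬ (S ω).Nonempty ∧ n = 0} := by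
      by_cases hn : n = 0
      · simp only [hn, and_true]
        exact (measurableSet_nonempty S hS).compl
      · simp only [hn, and_false]
        exact MeasurableSet.empty
    have h2 : MeasurableSet {ω | EMetric.infEdist (v n) (S ω) < η ∧
        edist (u ω) (v n) < EMetric.infEdist (u ω) (S ω) + η} := by
      have ha : MeasurableSet {ω | EMetric.infEdist (v n) (S ω) < η} :=
        measurableSet_lt (hS (v n)) measurable_const
      have hb : MeasurableSet {ω | edist (u ω) (v n) <
          EMetric.infEdist (u ω) (S ω) + η} :=
        measurableSet_lt (hu.edist measurable_const)
          ((measurable_infEdist_comp S hS hu).add measurable_const)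
      exact ha.inter hb
    have : {ω | Q ω n} = {ω | ¬ (S ω).Nonempty ∧ n = 0} ∪
        {ω | EMetric.infEdist (v n) (S ω) < η ∧
          edist (u ω) (v n) < EMetric.infEdist (u ω) (S ω) + η} := by
      ext ω; simp [hQ, Set.mem_union, Set.mem_setOf_eq]
    rw [this]
    exact h1.union h2
  refine ⟨fun ω => v (Nat.find (hex ω)), measurable_from_nat.comp (measurable_find hex hQm), ?_⟩
  intro ω hω
  have := Nat.find_spec (hex ω)
  rcases this with h | h
  · exact absurd hω h.1
  · exact h


lemma exists_approx_selection (S : Ω → Set E) (hcl : ∀ ω, IsClosed (S ω))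
    (hS : ∀ v : E, Measurable fun ω => EMetric.infEdist v (S ω))
    {y₀ : Ω → E} (hy : Measurable y₀) {δ : ℝ≥0∞} (hδ0 : δ ≠ 0) (hδt : δ ≠ ∞) :
    ∃ yy : Ω → E, Measurable yy ∧ ∀ ω, (S ω).Nonempty →
      yy ω ∈ S ω ∧ edist (y₀ ω) (yy ω) ≤ EMetric.infEdist (y₀ ω) (S ω) + 3 * δ := by
  classical
  set η : ℕ → ℝ≥0∞ := fun k => δ * 2⁻¹ ^ (k + 1) with hη
  have hη0' : ∀ k, η k ≠ 0 := fun k =>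
    mul_ne_zero hδ0 (pow_ne_zero _ (ENNReal.inv_ne_zero.2 ENNReal.ofNat_ne_top))
  have hηt' : ∀ k, η k ≠ ∞ := fun k =>
    ENNReal.mul_ne_top hδt (ENNReal.pow_ne_top (ENNReal.inv_ne_top.2 two_ne_zero))
  have step : ∀ (u : {f : Ω → E // Measurable f}) (k : ℕ),
      ∃ u' : {f : Ω → E // Measurable f}, ∀ ω, (S ω).Nonempty →
        EMetric.infEdist (u'.1 ω) (S ω) < η k ∧
        edist (u.1 ω) (u'.1 ω) < EMetric.infEdist (u.1 ω) (S ω) + η k := by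
    intro u k
    obtain ⟨u', hu', h⟩ := exists_step S hS u.2 (hη0' k) (hηt' k)
    exact ⟨⟨u', hu'⟩, h⟩
  let U : ℕ → {f : Ω → E // Measurable f} :=
    fun n => Nat.rec ⟨y₀, hy⟩ (fun k u => (step u k).choose) n
  have hU : ∀ k, ∀ ω, (S ω).Nonempty →
      EMetric.infEdist ((U (k + 1)).1 ω) (S ω) < η k ∧
      edist ((U k).1 ω) ((U (k + 1)).1 ω) < EMetric.infEdist ((U k).1 ω) (S ω) + η k :=
    fun k => (step (U k) k).choose_spec
  set T : Set Ω := {ω | (S ω).Nonempty} with hT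
  have hTm : MeasurableSet T := measurableSet_nonempty S hS
  set w : ℕ → Ω → E := fun k => T.piecewise ((U (k + 1)).1) y₀ with hw
  have hwm : ∀ k, Measurable (w k) := fun k => Measurable.piecewise hTm (U (k + 1)).2 hy
  have hwT : ∀ k, ∀ ω ∈ T, w k ω = (U (k + 1)).1 ω := fun k ω hω => Set.piecewise_eq_of_mem _ _ _ hω
  -- geometric bound
  have hgeom : ∀ ω ∈ T, ∀ k, edist (w k ω) (w (k + 1) ω) ≤ δ * 2⁻¹ ^ k := by
    intro ω hω k
    rw [hwT k ω hω, hwT (k + 1) ω hω]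
    have h1 := (hU (k + 1) ω hω).2
    have h2 := (hU k ω hω).1
    have h3 : edist ((U (k + 1)).1 ω) ((U (k + 2)).1 ω) ≤ η k + η (k + 1) := by
      refine h1.le.trans ?_
      gcongr
    refine h3.trans ?_
    have e1 : η (k + 1) ≤ η k := by
      apply mul_le_mul_right
      exact pow_le_pow_of_le_one zero_le (ENNReal.inv_le_one.2 one_le_two) (by omega)
    have e2 : η k + η (k + 1) ≤ η k + η k := add_le_add le_rfl e1
    refine e2.trans (le_of_eq ?_)
    have e3 : η k + η k = 2 * η k := (two_mul _).symm
    rw [e3, hη]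
    calc 2 * (δ * 2⁻¹ ^ (k + 1)) = δ * (2 * 2⁻¹ * 2⁻¹ ^ k) := by ring
      _ = δ * 2⁻¹ ^ k := by
          rw [ENNReal.mul_inv_cancel two_ne_zero ENNReal.ofNat_ne_top, one_mul]
  have h2inv : (2⁻¹ : ℝ≥0∞) < 1 := ENNReal.inv_lt_one.2 ENNReal.one_lt_two
  have hconv : ∀ ω, ∃ a, Tendsto (fun k => w k ω) atTop (𝓝 a) := by
    intro ω
    by_cases hω : ω ∈ T
    · exact cauchySeq_tendsto_of_complete
        (cauchySeq_of_edist_le_geometric 2⁻¹ δ h2inv hδt (hgeom ω hω))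
    · refine ⟨y₀ ω, ?_⟩
      have : (fun k => w k ω) = fun _ => y₀ ω := by
        funext k; exact Set.piecewise_eq_of_notMem _ _ _ hω
      rw [this]; exact tendsto_const_nhds
  set yy : Ω → E := fun ω => (hconv ω).choose with hyy
  have hlim : ∀ ω, Tendsto (fun k => w k ω) atTop (𝓝 (yy ω)) := fun ω => (hconv ω).choose_spec
  have hyym : Measurable yy :=
    measurable_of_tendsto_metrizable hwm (tendsto_pi_nhds.2 hlim)
  refine ⟨yy, hyym, fun ω hω => ?_⟩
  have hη_lim : Tendsto η atTop (𝓝 0) := by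
    have h0 : Tendsto (fun k : ℕ => (2⁻¹ : ℝ≥0∞) ^ (k + 1)) atTop (𝓝 0) :=
      (ENNReal.tendsto_pow_atTop_nhds_zero_of_lt_one h2inv).comp (tendsto_add_atTop_nat 1)
    have := ENNReal.Tendsto.const_mul (a := δ) h0 (Or.inr hδt)
    simpa [hη, mul_zero] using this
  constructor
  · -- membership
    have hc : Tendsto (fun k => EMetric.infEdist (w k ω) (S ω)) atTop
        (𝓝 (EMetric.infEdist (yy ω) (S ω))) :=
      (EMetric.continuous_infEdist.tendsto _).comp (hlim ω)
    have hb : Tendsto (fun k => EMetric.infEdist (w k ω) (S ω)) atTop (𝓝 0) := by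
      refine tendsto_of_tendsto_of_tendsto_of_le_of_le tendsto_const_nhds hη_lim
        (fun k => zero_le) (fun k => ?_)
      rw [hwT k ω hω]
      exact (hU k ω hω).1.le
    have h0 : EMetric.infEdist (yy ω) (S ω) = 0 := tendsto_nhds_unique hc hb
    rw [← (hcl ω).closure_eq]
    exact EMetric.mem_closure_iff_infEdist_zero.2 h0
  · -- distance bound
    have hstart : edist (y₀ ω) (w 0 ω) ≤ EMetric.infEdist (y₀ ω) (S ω) + η 0 := by
      rw [hwT 0 ω hω]
      exact (hU 0 ω hω).2.le
    have htail : edist (w 0 ω) (yy ω) ≤ δ / (1 - 2⁻¹) :=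
      edist_le_of_edist_le_geometric_of_tendsto₀ 2⁻¹ δ (hgeom ω hω) (hlim ω)
    have htail' : edist (w 0 ω) (yy ω) ≤ 2 * δ := by
      refine htail.trans_eq ?_
      rw [ENNReal.one_sub_inv_two, ENNReal.div_eq_inv_mul, inv_inv]
    calc edist (y₀ ω) (yy ω) ≤ edist (y₀ ω) (w 0 ω) + edist (w 0 ω) (yy ω) := edist_triangle _ _ _
      _ ≤ (EMetric.infEdist (y₀ ω) (S ω) + η 0) + 2 * δ := add_le_add hstart htail'
      _ ≤ (EMetric.infEdist (y₀ ω) (S ω) + δ) + 2 * δ := by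
          gcongr
          calc η 0 = δ * 2⁻¹ ^ 1 := rfl
            _ ≤ δ * 1 := by gcongr; simpa using h2inv.le
            _ = δ := mul_one _
      _ = EMetric.infEdist (y₀ ω) (S ω) + 3 * δ := by ring

lemma key_approx (P : Measure Ω) [IsProbabilityMeasure P] (p : ℝ≥0∞) [Fact (1 ≤ p)]
    (S : Ω → Set E) (hcl : ∀ ω, IsClosed (S ω))
    (hS : ∀ v : E, Measurable fun ω => EMetric.infEdist v (S ω))
    (y : Lp E p P) (Ψ : ℝ≥0∞)
    (hΨ : Ψ = if p = ∞ then essSup (fun ω => EMetric.infEdist (y ω) (S ω)) P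
      else (∫⁻ ω, EMetric.infEdist (y ω) (S ω) ^ p.toReal ∂P) ^ (1 / p.toReal))
    (hfin : Ψ ≠ ∞) {ε : ℝ} (hε : 0 < ε) :
    ∃ Y : Lp E p P, (∀ᵐ ω ∂P, Y ω ∈ S ω) ∧ ‖Y - y‖ ≤ Ψ.toReal + 3 * ε := by
  have hp1 : (1 : ℝ≥0∞) ≤ p := Fact.out
  have hp0 : p ≠ 0 := fun h => by simp [h] at hp1
  -- measurable representative of y
  set hsm := Lp.aestronglyMeasurable y with hsmdef
  set y₀ : Ω → E := hsm.mk y with hy₀def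
  have heq : ⇑y =ᵐ[P] y₀ := hsm.ae_eq_mk
  have hy₀m : Measurable y₀ := hsm.stronglyMeasurable_mk.measurable
  set D : Ω → ℝ≥0∞ := fun ω => EMetric.infEdist (y₀ ω) (S ω) with hDdef
  have hDm : Measurable D := measurable_infEdist_comp S hS hy₀m
  have hDae : (fun ω => EMetric.infEdist (y ω) (S ω)) =ᵐ[P] D :=
    heq.mono fun ω h => by simp only [hDdef, h]
  -- a.e. nonemptiness of S ω
  have hDfin : ∀ᵐ ω ∂P, D ω ≠ ∞ := by
    by_cases hptop : p = ∞
    · have h1 : ∀ᵐ ω ∂P, EMetric.infEdist (y ω) (S ω) ≤ Ψ := by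
        rw [hΨ, if_pos hptop]
        exact ENNReal.ae_le_essSup _
      filter_upwards [h1, hDae] with ω h h'
      rw [← h']
      exact fun htop => hfin (top_le_iff.1 (htop ▸ h))
    · have hq : 0 < p.toReal := ENNReal.toReal_pos hp0 hptop
      set q := p.toReal
      have hκ : (∫⁻ ω, EMetric.infEdist (y ω) (S ω) ^ q ∂P) ≠ ∞ := by
        intro hcon
        rw [hΨ, if_neg hptop, hcon] at hfin
        exact hfin (ENNReal.top_rpow_of_pos (by positivity))
      have haem : AEMeasurable (fun ω => EMetric.infEdist (y ω) (S ω)) P :=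
        hDm.aemeasurable.congr hDae.symm
      have h2 := ae_lt_top' (haem.pow aemeasurable_const) hκ
      filter_upwards [h2, hDae] with ω h h'
      rw [← h']
      intro htop
      rw [htop, ENNReal.top_rpow_of_pos hq] at h
      exact absurd h (lt_irrefl _)
  have hne : ∀ᵐ ω ∂P, (S ω).Nonempty := by
    filter_upwards [hDfin] with ω h
    rw [Set.nonempty_iff_ne_empty]
    intro hemp
    exact h (by simp [hDdef, hemp, EMetric.infEdist, Metric.infEDist_empty])
  -- apply the selection
  set δ : ℝ≥0∞ := ENNReal.ofReal ε with hδdef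
  have hδ0 : δ ≠ 0 := (ENNReal.ofReal_pos.2 hε).ne'
  have hδt : δ ≠ ∞ := ENNReal.ofReal_ne_top
  obtain ⟨yy, hyym, hprop⟩ := exists_approx_selection S hcl hS hy₀m hδ0 hδt
  have hmemae : ∀ᵐ ω ∂P, yy ω ∈ S ω := hne.mono fun ω h => (hprop ω h).1
  have hedist : ∀ᵐ ω ∂P, (‖yy ω - y₀ ω‖₊ : ℝ≥0∞) ≤ D ω + 3 * δ := by
    filter_upwards [hne] with ω h
    have := (hprop ω h).2
    rwa [edist_comm, edist_eq_enorm_sub] at this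
  -- eLpNorm bound
  have hΨ0 : Ψ = if p = ∞ then essSup D P else (∫⁻ ω, D ω ^ p.toReal ∂P) ^ (1 / p.toReal) := by
    rw [hΨ]
    by_cases hptop : p = ∞
    · rw [if_pos hptop, if_pos hptop, essSup_congr_ae hDae]
    · have hcong : (fun ω => EMetric.infEdist (y ω) (S ω) ^ p.toReal) =ᵐ[P]
          fun ω => D ω ^ p.toReal := hDae.mono fun ω h => by
        dsimp only at h ⊢; rw [h]
      rw [if_neg hptop, if_neg hptop, lintegral_congr_ae hcong]
  have hsn : eLpNorm (fun ω => yy ω - y₀ ω) p P ≤ Ψ + 3 * δ := by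
    by_cases hptop : p = ∞
    · rw [hptop, eLpNorm_exponent_top, eLpNormEssSup]
      refine le_trans (essSup_mono_ae hedist) ?_
      rw [hΨ0, if_pos hptop]
      refine essSup_le_of_ae_le _ ?_
      filter_upwards [ENNReal.ae_le_essSup D] with ω h
      exact add_le_add h le_rfl
    · have hq : 0 < p.toReal := ENNReal.toReal_pos hp0 hptop
      have hq1 : 1 ≤ p.toReal := by
        have := ENNReal.toReal_mono hptop hp1
        simpa using this
      rw [eLpNorm_eq_lintegral_rpow_enorm_toReal hp0 hptop]
      calc (∫⁻ ω, (‖yy ω - y₀ ω‖₊ : ℝ≥0∞) ^ p.toReal ∂P) ^ (1 / p.toReal)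
          ≤ (∫⁻ ω, (D ω + 3 * δ) ^ p.toReal ∂P) ^ (1 / p.toReal) := by
            refine ENNReal.rpow_le_rpow ?_ (by positivity)
            refine lintegral_mono_ae (hedist.mono fun ω h => ?_)
            exact ENNReal.rpow_le_rpow h hq.le
        _ ≤ (∫⁻ ω, D ω ^ p.toReal ∂P) ^ (1 / p.toReal) +
            (∫⁻ _, (3 * δ) ^ p.toReal ∂P) ^ (1 / p.toReal) :=
            ENNReal.lintegral_Lp_add_le hDm.aemeasurable aemeasurable_const hq1
        _ = Ψ + 3 * δ := by
            rw [hΨ0, if_neg hptop]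
            congr 1
            rw [lintegral_const, measure_univ, mul_one, ← ENNReal.rpow_mul,
              mul_one_div_cancel hq.ne', ENNReal.rpow_one]
  have hsnlt : eLpNorm (fun ω => yy ω - y₀ ω) p P < ∞ :=
    lt_of_le_of_lt hsn (ENNReal.add_lt_top.2 ⟨hfin.lt_top, by
      exact ENNReal.mul_lt_top (by norm_num) hδt.lt_top⟩)
  have hmemg : MemLp (fun ω => yy ω - y₀ ω) p P :=
    ⟨(hyym.sub hy₀m).aestronglyMeasurable, hsnlt⟩
  have hmemyy : MemLp yy p P := by
    have h1 : MemLp y₀ p P := (Lp.memLp y).ae_eq heq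
    have h2 := h1.add hmemg
    refine h2.ae_eq (Filter.Eventually.of_forall fun ω => ?_)
    simp only [Pi.add_apply]
    abel
  refine ⟨hmemyy.toLp yy, ?_, ?_⟩
  · filter_upwards [hmemyy.coeFn_toLp, hmemae] with ω h h'
    rw [h]; exact h'
  · rw [Lp.norm_def]
    have hae : ⇑(hmemyy.toLp yy - y) =ᵐ[P] fun ω => yy ω - y₀ ω := by
      filter_upwards [Lp.coeFn_sub (hmemyy.toLp yy) y, hmemyy.coeFn_toLp, heq] with ω h1 h2 h3
      rw [h1, Pi.sub_apply, h2, h3]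
    rw [eLpNorm_congr_ae hae]
    have h3δ : (3 * δ : ℝ≥0∞) ≠ ∞ := ENNReal.mul_ne_top (by norm_num) hδt
    calc (eLpNorm (fun ω => yy ω - y₀ ω) p P).toReal
        ≤ (Ψ + 3 * δ).toReal := ENNReal.toReal_mono (by finiteness) hsn
      _ = Ψ.toReal + 3 * ε := by
          rw [ENNReal.toReal_add hfin h3δ, ENNReal.toReal_mul, hδdef,
            ENNReal.toReal_ofReal hε.le]
          norm_num


end ExactPen

set_option maxHeartbeats 2000000

/-- **Theorem (global exactness of the penalty function with the distance penalty term).**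
Let `1 ≤ p ≤ ∞`, `A ⊆ ℝ^d` be closed, `G` have closed images, and let
`φ(x,y) = (∫ dist(y(ω), G(x,ω))^p dP)^{1/p}` (essential supremum when `p = ∞`),
`Φ_c = 𝓘 + c·φ`. If `𝓘` attains a global minimum on the feasible set `𝓕`, `𝓘` is Lipschitz
continuous on bounded sets, and some sublevel set `{(x,y) : x ∈ A, Φ_c(x,y) < I_*}` is bounded,
then `Φ_c` is globally exact: there is `c_* ≥ 0` such that for all `c ≥ c_*` the global minimizers
of `Φ_c` on `A × L^p` coincide with the global minimizers of `𝓘` on `𝓕`. -/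
theorem exact_penalty_distance_term
    {d m : ℕ} {Ω : Type*} [MeasurableSpace Ω] (P : Measure Ω) [IsProbabilityMeasure P]
    (p : ℝ≥0∞) [Fact (1 ≤ p)]
    (f : EuclideanSpace ℝ (Fin d) → EuclideanSpace ℝ (Fin m) → Ω → ℝ)
    (A : Set (EuclideanSpace ℝ (Fin d))) (hA : IsClosed A)
    (G : EuclideanSpace ℝ (Fin d) → Ω → Set (EuclideanSpace ℝ (Fin m)))
    (hGclosed : ∀ x ω, IsClosed (G x ω))
    (hGmeas : ∀ x v, Measurable fun ω => EMetric.infEdist v (G x ω))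
    (hint : ∀ (x : EuclideanSpace ℝ (Fin d)) (y : Lp (EuclideanSpace ℝ (Fin m)) p P),
      Integrable (fun ω => f x (y ω) ω) P)
    (𝓘 : EuclideanSpace ℝ (Fin d) × Lp (EuclideanSpace ℝ (Fin m)) p P → ℝ)
    (h𝓘 : ∀ z, 𝓘 z = ∫ ω, f z.1 (z.2 ω) ω ∂P)
    (φ : EuclideanSpace ℝ (Fin d) × Lp (EuclideanSpace ℝ (Fin m)) p P → ℝ≥0∞)
    (hφ : ∀ z, φ z =
      if p = ∞ then essSup (fun ω => EMetric.infEdist (z.2 ω) (G z.1 ω)) P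
      else (∫⁻ ω, EMetric.infEdist (z.2 ω) (G z.1 ω) ^ p.toReal ∂P) ^ (1 / p.toReal))
    (Φ : ℝ → EuclideanSpace ℝ (Fin d) × Lp (EuclideanSpace ℝ (Fin m)) p P → EReal)
    (hΦ : ∀ c z, Φ c z = ((𝓘 z : ℝ) : EReal) + (c : EReal) * ((φ z : ℝ≥0∞) : EReal))
    (𝓕 : Set (EuclideanSpace ℝ (Fin d) × Lp (EuclideanSpace ℝ (Fin m)) p P))
    (h𝓕 : 𝓕 = {z | z.1 ∈ A ∧ ∀ᵐ ω ∂P, z.2 ω ∈ G z.1 ω})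
    -- (1) existence of a globally optimal solution of the problem (𝒫)
    (zs : EuclideanSpace ℝ (Fin d) × Lp (EuclideanSpace ℝ (Fin m)) p P)
    (hzs : zs ∈ 𝓕 ∧ ∀ w ∈ 𝓕, 𝓘 zs ≤ 𝓘 w)
    -- (3) 𝓘 is Lipschitz continuous on bounded sets
    (hLip : ∀ B : Set (EuclideanSpace ℝ (Fin d) × Lp (EuclideanSpace ℝ (Fin m)) p P),
      Bornology.IsBounded B → ∃ L : ℝ, 0 < L ∧
        ∀ z₁ ∈ B, ∀ z₂ ∈ B, |𝓘 z₁ - 𝓘 z₂| ≤ L * ‖z₁ - z₂‖)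
    -- (4) a sublevel set below the optimal value I_* = 𝓘 zs is bounded
    (hbdd : ∃ c : ℝ, 0 ≤ c ∧
      Bornology.IsBounded {z | z.1 ∈ A ∧ Φ c z < ((𝓘 zs : ℝ) : EReal)}) :
    ∃ cstar : ℝ, 0 ≤ cstar ∧ ∀ c : ℝ, cstar ≤ c →
      {z | z.1 ∈ A ∧ ∀ w, w.1 ∈ A → Φ c z ≤ Φ c w} = {z ∈ 𝓕 | ∀ w ∈ 𝓕, 𝓘 z ≤ 𝓘 w} := by
  
  classical
  have hp1 : (1 : ℝ≥0∞) ≤ p := Fact.out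
  have hp0 : p ≠ 0 := fun h => by simp [h] at hp1
  -- coercion helpers
  have hcoe : ∀ a : ℝ≥0∞, a ≠ ∞ → ((a.toReal : ℝ) : EReal) = (a : EReal) := by
    intro a ha
    have h1 := EReal.coe_toReal (x := (a : EReal))
      (by simp [EReal.coe_ennreal_eq_top_iff, ha]) (EReal.coe_ennreal_ne_bot a)
    rwa [EReal.toReal_coe_ennreal] at h1
  have hΦr : ∀ (c : ℝ) z, φ z ≠ ∞ →
      Φ c z = (((𝓘 z + c * (φ z).toReal : ℝ)) : EReal) := by
    intro c z hz
    rw [hΦ, ← hcoe _ hz, ← EReal.coe_mul, ← EReal.coe_add]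
  have hΦtop : ∀ (c : ℝ), 0 < c → ∀ z, φ z = ∞ → Φ c z = ⊤ := by
    intro c hc z hz
    rw [hΦ, hz, EReal.coe_ennreal_top, EReal.coe_mul_top_of_pos hc,
      EReal.add_top_of_ne_bot (EReal.coe_ne_bot _)]
  have hΦ0 : ∀ (c : ℝ) z, φ z = 0 → Φ c z = ((𝓘 z : ℝ) : EReal) := by
    intro c z h
    rw [hΦ, h, EReal.coe_ennreal_zero, mul_zero, add_zero]
  -- feasibility ↔ φ = 0
  have hfeas0 : ∀ z : EuclideanSpace ℝ (Fin d) × Lp (EuclideanSpace ℝ (Fin m)) p P, (∀ᵐ ω ∂P, z.2 ω ∈ G z.1 ω) → φ z = 0 := by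
    intro z hz
    have h0 : (fun ω => EMetric.infEdist (z.2 ω) (G z.1 ω)) =ᵐ[P] 0 :=
      hz.mono fun ω h => by simp [EMetric.infEdist, Metric.infEDist_zero_of_mem h]
    rw [hφ]
    by_cases hptop : p = ∞
    · rw [if_pos hptop, essSup_congr_ae h0]
      exact essSup_const 0 (IsProbabilityMeasure.ne_zero P)
    · have hq : 0 < p.toReal := ENNReal.toReal_pos hp0 hptop
      rw [if_neg hptop]
      have h1 : (fun ω => EMetric.infEdist (z.2 ω) (G z.1 ω) ^ p.toReal) =ᵐ[P] 0 :=
        h0.mono fun ω h => by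
          simp only [Pi.zero_apply] at h ⊢
          rw [h, ENNReal.zero_rpow_of_pos hq]
      have h2 : (∫⁻ ω, (0 : Ω → ℝ≥0∞) ω ∂P) = 0 := by simp
      rw [lintegral_congr_ae h1, h2, ENNReal.zero_rpow_of_pos (by positivity)]
  have haem : ∀ z : EuclideanSpace ℝ (Fin d) × Lp (EuclideanSpace ℝ (Fin m)) p P, AEMeasurable (fun ω => EMetric.infEdist (z.2 ω) (G z.1 ω)) P := by
    intro z
    have hsm := Lp.aestronglyMeasurable z.2
    have h1 : Measurable fun ω => EMetric.infEdist (hsm.mk z.2 ω) (G z.1 ω) :=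
      ExactPen.measurable_infEdist_comp (G z.1) (hGmeas z.1) hsm.stronglyMeasurable_mk.measurable
    exact h1.aemeasurable.congr (hsm.ae_eq_mk.symm.mono fun ω h => by
      dsimp only; rw [h])
  have hzero_feas : ∀ z : EuclideanSpace ℝ (Fin d) × Lp (EuclideanSpace ℝ (Fin m)) p P, φ z = 0 → ∀ᵐ ω ∂P, z.2 ω ∈ G z.1 ω := by
    intro z hz
    have h0 : ∀ᵐ ω ∂P, EMetric.infEdist (z.2 ω) (G z.1 ω) = 0 := by
      rw [hφ] at hz
      by_cases hptop : p = ∞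
      · rw [if_pos hptop] at hz
        filter_upwards [ENNReal.ae_le_essSup
          (fun ω => EMetric.infEdist (z.2 ω) (G z.1 ω))] with ω h
        exact le_antisymm (hz ▸ h) zero_le
      · rw [if_neg hptop] at hz
        have hq : 0 < p.toReal := ENNReal.toReal_pos hp0 hptop
        have hint0 : (∫⁻ ω, EMetric.infEdist (z.2 ω) (G z.1 ω) ^ p.toReal ∂P) = 0 := by
          rcases ENNReal.rpow_eq_zero_iff.1 hz with ⟨h1, _⟩ | ⟨_, h2⟩
          · exact h1
          · exfalso
            have : (0:ℝ) < 1 / p.toReal := by positivity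
            linarith
        have h2 := (lintegral_eq_zero_iff' ((haem z).pow aemeasurable_const)).1 hint0
        filter_upwards [h2] with ω h
        rcases ENNReal.rpow_eq_zero_iff.1 h with ⟨h1, _⟩ | ⟨_, h2'⟩
        · exact h1
        · linarith
    filter_upwards [h0] with ω h
    have h1 := EMetric.mem_closure_iff_infEdist_zero.2 h
    rwa [(hGclosed z.1 ω).closure_eq] at h1
  -- setup of radii and constants
  obtain ⟨c₀, hc₀0, hbd⟩ := hbdd
  set Istar : ℝ := 𝓘 zs with hIstar
  have hzsF := hzs.1
  rw [h𝓕] at hzsF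
  obtain ⟨R₀, hR₀⟩ := hbd.subset_closedBall 0
  set R : ℝ := max R₀ ‖zs‖ + 4 with hRdef
  have hmaxnn : (0:ℝ) ≤ max R₀ ‖zs‖ := le_trans (norm_nonneg zs) (le_max_right _ _)
  have hRpos : 0 < R := by rw [hRdef]; linarith
  obtain ⟨L, hLpos, hLip'⟩ := hLip (Metric.closedBall 0 R) Metric.isBounded_closedBall
  set M : ℝ := 2 * L * R with hMdef
  have hMpos : 0 < M := by rw [hMdef]; positivity
  set c1 : ℝ := max c₀ (max 1 (max L (2 * M))) with hc1def
  have hc₀c1 : c₀ ≤ c1 := le_max_left _ _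
  have h1c1 : (1:ℝ) ≤ c1 := le_trans (le_max_left _ _) (le_max_right _ _)
  have hLc1 : L ≤ c1 :=
    le_trans (le_trans (le_max_left L (2*M)) (le_max_right 1 _)) (le_max_right c₀ _)
  have h2Mc1 : 2 * M ≤ c1 :=
    le_trans (le_trans (le_max_right L (2*M)) (le_max_right 1 _)) (le_max_right c₀ _)
  have hzs_ball : zs ∈ Metric.closedBall (0 : EuclideanSpace ℝ (Fin d) ×
      Lp (EuclideanSpace ℝ (Fin m)) p P) R := by
    rw [mem_closedBall_zero_iff]
    have := le_max_right R₀ ‖zs‖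
    rw [hRdef]; linarith
  -- the key claim
  have claim : ∀ c : ℝ, c1 ≤ c → ∀ w, w.1 ∈ A → ((Istar : ℝ) : EReal) ≤ Φ c w := by
    intro c hc w hwA
    by_contra hcon
    push_neg at hcon
    have hcpos : (0:ℝ) < c := by linarith
    have hφne : φ w ≠ ∞ := by
      intro h
      rw [hΦtop c hcpos w h] at hcon
      exact (not_top_lt) hcon
    set r := (φ w).toReal with hrdef
    have hr0 : 0 ≤ r := ENNReal.toReal_nonneg
    have hreal : 𝓘 w + c * r < Istar := by
      rw [hΦr c w hφne] at hcon
      exact_mod_cast hcon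
    have hwS : w ∈ {z | z.1 ∈ A ∧ Φ c₀ z < ((Istar : ℝ) : EReal)} := by
      refine ⟨hwA, ?_⟩
      rw [hΦr c₀ w hφne]
      have hle : 𝓘 w + c₀ * r ≤ 𝓘 w + c * r := by nlinarith
      exact_mod_cast lt_of_le_of_lt hle hreal
    have hwball : ‖w‖ ≤ max R₀ ‖zs‖ :=
      le_trans (mem_closedBall_zero_iff.1 (hR₀ hwS)) (le_max_left _ _)
    have hwB : w ∈ Metric.closedBall (0 : EuclideanSpace ℝ (Fin d) ×
        Lp (EuclideanSpace ℝ (Fin m)) p P) R := by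
      rw [mem_closedBall_zero_iff, hRdef]; linarith
    have hIw : Istar - M ≤ 𝓘 w := by
      have h1 := abs_le.1 (hLip' w hwB zs hzs_ball)
      have h2 : ‖w - zs‖ ≤ 2 * R := by
        calc ‖w - zs‖ ≤ ‖w‖ + ‖zs‖ := norm_sub_le _ _
          _ ≤ R + R := by
              have h := le_max_right R₀ ‖zs‖
              have h' : ‖zs‖ ≤ R := by rw [hRdef]; linarith
              have h'' : ‖w‖ ≤ R := by rw [hRdef]; linarith
              linarith
          _ = 2 * R := by ring
      have h3 : L * ‖w - zs‖ ≤ L * (2 * R) := by nlinarith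
      rw [hMdef]
      nlinarith [h1.1, h1.2]
    have hcr : c * r < M := by linarith
    have hrsmall : r ≤ 1 := by nlinarith
    have hkey : ∀ ε : ℝ, 0 < ε → ε ≤ 1/3 → Istar ≤ 𝓘 w + c * r + L * (3 * ε) := by
      intro ε hε hε3
      obtain ⟨Y, hYmem, hYnorm⟩ := ExactPen.key_approx P p (G w.1) (hGclosed w.1) (hGmeas w.1)
        w.2 (φ w) (hφ w) hφne hε
      set wh : EuclideanSpace ℝ (Fin d) × Lp (EuclideanSpace ℝ (Fin m)) p P :=
        (w.1, Y) with hwhdef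
      have hwhF : wh ∈ 𝓕 := by rw [h𝓕]; exact ⟨hwA, hYmem⟩
      have hIwh : Istar ≤ 𝓘 wh := hzs.2 wh hwhF
      have hnormeq : ‖wh - w‖ = ‖Y - w.2‖ := by
        have h1 : wh - w = ((0 : EuclideanSpace ℝ (Fin d)), Y - w.2) := by
          rw [hwhdef]
          exact Prod.ext (by simp) rfl
        rw [h1, Prod.norm_def]
        simp only [norm_zero]
        exact max_eq_right (norm_nonneg _)
      have hnormsub : ‖wh - w‖ ≤ r + 3 * ε := by rw [hnormeq]; linarith [hYnorm]
      have hwhB : wh ∈ Metric.closedBall (0 : EuclideanSpace ℝ (Fin d) ×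
          Lp (EuclideanSpace ℝ (Fin m)) p P) R := by
        rw [mem_closedBall_zero_iff]
        have h4 : wh = w + (wh - w) := by abel
        have h5 : ‖wh‖ ≤ ‖w‖ + ‖wh - w‖ := by
          conv_lhs => rw [h4]
          exact norm_add_le _ _
        rw [hRdef]
        linarith
      have hlip2 := abs_le.1 (hLip' wh hwhB w hwB)
      have h6 : L * ‖wh - w‖ ≤ L * (r + 3 * ε) := by nlinarith
      have h7 : 𝓘 wh ≤ 𝓘 w + L * (r + 3 * ε) := by linarith [hlip2.1, hlip2.2]
      have h8 : L * r ≤ c * r := by nlinarith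
      nlinarith
    -- derive contradiction
    have hgap : 0 < Istar - (𝓘 w + c * r) := by linarith
    set gap := Istar - (𝓘 w + c * r) with hgapdef
    set ε : ℝ := min (1/3) (gap / (6 * L)) with hεdef
    have hεpos : 0 < ε := by
      rw [hεdef]
      apply lt_min (by norm_num)
      positivity
    have hε3 : ε ≤ 1/3 := min_le_left _ _
    have hεg : ε ≤ gap / (6 * L) := min_le_right _ _
    have := hkey ε hεpos hε3
    have h9 : L * (3 * ε) ≤ gap / 2 := by
      have h10 := hεg
      rw [le_div_iff₀ (by positivity : (0:ℝ) < 6 * L)] at h10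
      linarith
    linarith
  -- assemble
  have hφzs : φ zs = 0 := hfeas0 zs hzsF.2
  refine ⟨c1 + 1, by linarith, fun c hc => ?_⟩
  ext z
  simp only [Set.mem_setOf_eq, Set.mem_sep_iff]
  constructor
  · rintro ⟨hzA, hmin⟩
    have h1 : Φ c z ≤ ((Istar : ℝ) : EReal) := by
      have := hmin zs hzsF.1
      rwa [hΦ0 c zs hφzs] at this
    have h2 : ((Istar : ℝ) : EReal) ≤ Φ c z := claim c (by linarith) z hzA
    have heqz : Φ c z = ((Istar : ℝ) : EReal) := le_antisymm h1 h2
    have hφnez : φ z ≠ ∞ := by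
      intro h
      rw [hΦtop c (by linarith) z h] at heqz
      exact (EReal.coe_ne_top Istar) heqz.symm
    set rz := (φ z).toReal with hrzdef
    have hrzeq : 𝓘 z + c * rz = Istar := by
      rw [hΦr c z hφnez] at heqz
      exact_mod_cast heqz
    have hrz0 : rz = 0 := by
      by_contra hne
      have hrzpos : 0 < rz := lt_of_le_of_ne ENNReal.toReal_nonneg (Ne.symm hne)
      have hlt : Φ (c - 2⁻¹) z < ((Istar : ℝ) : EReal) := by
        rw [hΦr (c - 2⁻¹) z hφnez]
        have : 𝓘 z + (c - 2⁻¹) * rz < Istar := by nlinarith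
        exact_mod_cast this
      exact absurd hlt (not_lt.2 (claim (c - 2⁻¹) (by linarith) z hzA))
    have hφz0 : φ z = 0 := by
      rcases (ENNReal.toReal_eq_zero_iff _).1 hrz0 with h | h
      · exact h
      · exact absurd h hφnez
    have hzF : z ∈ 𝓕 := by rw [h𝓕]; exact ⟨hzA, hzero_feas z hφz0⟩
    have h𝓘zeq : 𝓘 z = Istar := by
      rw [hrz0, mul_zero, add_zero] at hrzeq
      exact hrzeq
    exact ⟨hzF, fun v hv => h𝓘zeq ▸ hzs.2 v hv⟩
  · rintro ⟨hzF, hopt⟩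
    have hzF' := hzF
    rw [h𝓕] at hzF'
    refine ⟨hzF'.1, fun v hv => ?_⟩
    have h𝓘zeq : 𝓘 z = Istar := le_antisymm (hopt zs hzs.1) (hzs.2 z hzF)
    rw [hΦ0 c z (hfeas0 z hzF'.2), h𝓘zeq]
    exact claim c (by linarith) v hv
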